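/- For every poset P, the set Σ = {{p} : p ∈ P} of singletons is a join-seed of the lattice Co(P). -/
import Mathlib


/-! Common definitions: lattices of order-convex subsets of a poset,
length of a poset, the identities (S), (U), (B), (L2), (H_n), (H_{m,n}),
join-irreducibility, the join-dependency relation, join-seeds,
the posets P_{I,J}, tree-like posets, D-closed sets,
and complete lattice congruences. -/

open Set

/-- The lattice `Co P` of all order-convex subsets of a poset `P`. -/
def Co (P : Type*) [PartialOrder P] : Type _ := {s : Set P // s.OrdConnected}

namespace Co

variable {P : Type*} [PartialOrder P]

instance : PartialOrder (Co P) := Subtype.partialOrder _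

instance : InfSet (Co P) :=
  ⟨fun S => ⟨⋂ s ∈ S, s.1, Set.ordConnected_biInter fun s _ => s.2⟩⟩

noncomputable instance : CompleteLattice (Co P) :=
  completeLatticeOfInf (Co P) (by
    intro S
    constructor
    · intro t ht
      exact Set.biInter_subset_of_mem (t := fun s => s.1) ht
    · intro b hb
      exact Set.subset_iInter₂ fun t ht => hb ht)

/-- The order-convex subset of `P` with underlying set `X`. -/
def mk' (X : Set P) (hX : X.OrdConnected) : Co P := ⟨X, hX⟩

/-- The singleton `{p}`, as an order-convex set. -/
def sngl (p : P) : Co P := ⟨{p}, Set.ordConnected_singleton⟩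

/-- The empty order-convex set. -/
def emp : Co P := ⟨∅, Set.ordConnected_empty⟩

end Co

/-- `lengthLE P n` states that the poset `P` has length at most `n`, that is,
every finite chain of `P` has at most `n + 1` elements. -/
def lengthLE (P : Type*) [PartialOrder P] (n : ℕ) : Prop :=
  ∀ C : Finset P, IsChain (· ≤ ·) (C : Set P) → C.card ≤ n + 1

section Identities

/-- The Stirlitz identity (S). -/
def IdS (L : Type*) [Lattice L] : Prop :=
  ∀ a b b₀ b₁ c : L,
    a ⊓ ((b ⊓ (b₀ ⊔ b₁)) ⊔ c) =
      (a ⊓ (b ⊓ (b₀ ⊔ b₁)))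
      ⊔ (a ⊓ (b₀ ⊔ c) ⊓ ((b ⊓ (b₀ ⊔ b₁) ⊓ (a ⊔ b₀)) ⊔ c))
      ⊔ (a ⊓ (b₁ ⊔ c) ⊓ ((b ⊓ (b₀ ⊔ b₁) ⊓ (a ⊔ b₁)) ⊔ c))

/-- The Udav identity (U). -/
def IdU (L : Type*) [Lattice L] : Prop :=
  ∀ x x₀ x₁ x₂ : L,
    x ⊓ (x₀ ⊔ x₁) ⊓ (x₁ ⊔ x₂) ⊓ (x₀ ⊔ x₂) =
      (x ⊓ x₀ ⊓ (x₁ ⊔ x₂)) ⊔ (x ⊓ x₁ ⊓ (x₀ ⊔ x₂)) ⊔ (x ⊓ x₂ ⊓ (x₀ ⊔ x₁))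

/-- The Bond identity (B). -/
def IdB (L : Type*) [Lattice L] : Prop :=
  ∀ x a₀ a₁ b₀ b₁ : L,
    x ⊓ (a₀ ⊔ a₁) ⊓ (b₀ ⊔ b₁) =
      (x ⊓ a₀ ⊓ (b₀ ⊔ b₁)) ⊔ (x ⊓ a₁ ⊓ (b₀ ⊔ b₁))
      ⊔ (x ⊓ b₀ ⊓ (a₀ ⊔ a₁)) ⊔ (x ⊓ b₁ ⊓ (a₀ ⊔ a₁))
      ⊔ (x ⊓ (a₀ ⊔ a₁) ⊓ (b₀ ⊔ b₁) ⊓ (a₀ ⊔ b₀) ⊓ (a₁ ⊔ b₁))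
      ⊔ (x ⊓ (a₀ ⊔ a₁) ⊓ (b₀ ⊔ b₁) ⊓ (a₀ ⊔ b₁) ⊓ (a₁ ⊔ b₀))

/-- The identity (L₂). -/
def IdL2 (L : Type*) [Lattice L] : Prop :=
  ∀ a b b' c c' : L,
    a ⊓ ((b ⊓ (c ⊔ c')) ⊔ b') =
      (a ⊓ b ⊓ (c ⊔ c')) ⊔ (a ⊓ ((b ⊓ c) ⊔ b')) ⊔ (a ⊓ ((b ⊓ c') ⊔ b'))

variable {L : Type*} [Lattice L]

/-- The lattice polynomial `U_{i,n}` (in the variables `x₀, …, xₙ, x'₁, …, x'ₙ`). -/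
def Upoly (x x' : ℕ → L) (n : ℕ) (i : ℕ) : L :=
  if h : n ≤ i then x n
  else x i ⊓ (Upoly x x' n (i + 1) ⊔ x' (i + 1))
  termination_by n - i
  decreasing_by omega

/-- The lattice polynomial `V_{i,j,n}`. -/
def Vpoly (x x' : ℕ → L) (n i : ℕ) (j : ℕ) : L :=
  if h : i ≤ j then (x i ⊓ Upoly x x' n (i + 1)) ⊔ (x i ⊓ x' (i + 1))
  else x j ⊓ (Vpoly x x' n i (j + 1) ⊔ x' (j + 1))
  termination_by i - j
  decreasing_by omega

/-- The lattice polynomial `W_{i,j,n}`. -/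
def Wpoly (x x' : ℕ → L) (n i : ℕ) (j : ℕ) : L :=
  if h : i ≤ j then
    x i ⊓ (x' (i + 1) ⊔ x' (i + 2)) ⊓ ((Upoly x x' n (i + 1) ⊓ (x i ⊔ x' (i + 2))) ⊔ x' (i + 1))
  else x j ⊓ (Wpoly x x' n i (j + 1) ⊔ x' (j + 1))
  termination_by i - j
  decreasing_by omega

/-- `bigJoin f k = f 0 ⊔ f 1 ⊔ ⋯ ⊔ f k`. -/
def bigJoin (f : ℕ → L) : ℕ → L
  | 0 => f 0
  | k + 1 => bigJoin f k ⊔ f (k + 1)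

end Identities

/-- The identity (Hₙ) : `Uₙ = ⋁_{0 ≤ i ≤ n-1} V_{i,n} ∨ ⋁_{0 ≤ i ≤ n-2} W_{i,n}`
(intended for `n ≥ 1`). -/
def IdH (n : ℕ) (L : Type*) [Lattice L] : Prop :=
  ∀ x x' : ℕ → L,
    Upoly x x' n 0 =
      bigJoin (fun i =>
        if i + 2 ≤ n then Vpoly x x' n i 0 ⊔ Wpoly x x' n i 0 else Vpoly x x' n i 0) (n - 1)

/-- The identity (H_{m,n}) (intended for `m, n ≥ 1`); the common base point is
`x 0 = y 0 = t`. -/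
def IdHmn (m n : ℕ) (L : Type*) [Lattice L] : Prop :=
  ∀ x x' y y' : ℕ → L, x 0 = y 0 →
    Upoly x x' m 0 ⊓ Upoly y y' n 0 =
      bigJoin (fun i =>
          if i + 2 ≤ m then
            (Vpoly x x' m i 0 ⊓ Upoly y y' n 0) ⊔ (Wpoly x x' m i 0 ⊓ Upoly y y' n 0)
          else Vpoly x x' m i 0 ⊓ Upoly y y' n 0) (m - 1)
      ⊔ bigJoin (fun j =>
          if j + 2 ≤ n then
            (Upoly x x' m 0 ⊓ Vpoly y y' n j 0) ⊔ (Upoly x x' m 0 ⊓ Wpoly y y' n j 0)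
          else Upoly x x' m 0 ⊓ Vpoly y y' n j 0) (n - 1)
      ⊔ (Upoly x x' m 0 ⊓ Upoly y y' n 0 ⊓ (x 1 ⊔ y' 1) ⊓ (x' 1 ⊔ y 1))

/-- `p` is join-irreducible: `p = x ⊔ y` implies `p = x` or `p = y`. -/
def JIrr {L : Type*} [Lattice L] (p : L) : Prop :=
  ∀ x y : L, p = x ⊔ y → p = x ∨ p = y

/-- The join-dependency relation `p D q`. -/
def DRel {L : Type*} [Lattice L] (p q : L) : Prop :=
  p ≠ q ∧ ∃ x : L, p ≤ q ⊔ x ∧ ∀ y < q, ¬ p ≤ y ⊔ x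

/-- A subset `S` of a lattice `L` is a join-seed. -/
def JoinSeed (L : Type*) [Lattice L] (S : Set L) : Prop :=
  (∀ p ∈ S, JIrr p) ∧
  (∀ a : L, ∃ T ⊆ S, IsLUB T a) ∧
  (∀ p ∈ S, ∀ a b : L, p ≤ a ⊔ b → ¬ p ≤ a → ¬ p ≤ b →
    ∃ x ∈ S, ∃ y ∈ S, x ≤ a ∧ y ≤ b ∧ p ≤ x ⊔ y ∧
      (∀ x' < x, ¬ p ≤ x' ⊔ y) ∧ (∀ y' < y, ¬ p ≤ x ⊔ y'))

/-- The poset `P_{I,J} = I ∪ {p} ∪ J`, where every element of `I` is below `p`,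
`p` is below every element of `J`, every element of `I` is below every element
of `J`, and there are no other strict comparabilities. -/
def PIJ (I J : Type*) : Type _ := I ⊕ (Unit ⊕ J)

namespace PIJ

variable {I J : Type*}

/-- The rank (height) of an element of `P_{I,J}`. -/
def rank (a : PIJ I J) : ℕ :=
  Sum.elim (fun _ => 0) (Sum.elim (fun _ => 1) fun _ => 2) a

instance : PartialOrder (PIJ I J) where
  le a b := a = b ∨ rank a < rank b
  le_refl a := Or.inl rfl
  le_trans a b c hab hbc := by
    rcases hab with rfl | h
    · exact hbc
    · rcases hbc with rfl | h'
      · exact Or.inr h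
      · exact Or.inr (h.trans h')
  le_antisymm a b hab hba := by
    rcases hab with rfl | h
    · rfl
    · rcases hba with rfl | h'
      · rfl
      · omega

end PIJ

/-- A poset is tree-like if it has no infinite bounded chain and between any two
points there is at most one repetition-free finite path with respect to the
covering relation. -/
def TreeLike (P : Type*) [PartialOrder P] : Prop :=
  (∀ C : Set P, IsChain (· ≤ ·) C → BddAbove C → BddBelow C → C.Finite) ∧
  (∀ a b : P, ∀ l₁ l₂ : List P,
    l₁.Nodup → l₁.head? = some a → l₁.getLast? = some b →
      l₁.Chain' (fun u v => u ⋖ v ∨ v ⋖ u) →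
    l₂.Nodup → l₂.head? = some a → l₂.getLast? = some b →
      l₂.Chain' (fun u v => u ⋖ v ∨ v ⋖ u) →
    l₁ = l₂)

/-- A subset `U` of a poset `P` is `D`-closed. -/
def DClosed {P : Type*} [PartialOrder P] (U : Set P) : Prop :=
  ∀ x p y : P, x < p → p < y → (x ∈ U ∨ y ∈ U) → p ∈ U

/-- A complete congruence of a complete lattice. -/
structure IsCompleteCongr {L : Type*} [CompleteLattice L] (θ : L → L → Prop) : Prop where
  refl : ∀ x, θ x x
  symm : ∀ {x y}, θ x y → θ y x
  trans : ∀ {x y z}, θ x y → θ y z → θ x z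
  sup : ∀ {a b c d}, θ a b → θ c d → θ (a ⊔ c) (b ⊔ d)
  inf : ∀ {a b c d}, θ a b → θ c d → θ (a ⊓ c) (b ⊓ d)
  cSup : ∀ (x : L) (Y : Set L), Y.Nonempty → (∀ y ∈ Y, θ x y) → θ x (sSup Y)
  cInf : ∀ (x : L) (Y : Set L), Y.Nonempty → (∀ y ∈ Y, θ x y) → θ x (sInf Y)

/-- The map `h_U : Co(P) → Co(P ∖ U)`, `X ↦ X ∖ U`. -/
def coRestrict {P : Type*} [PartialOrder P] (U : Set P) (X : Co P) :
    Co {p : P // p ∉ U} :=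
  ⟨Subtype.val ⁻¹' X.1, by
    constructor
    rintro a ha b hb z hz
    exact X.2.out ha hb ⟨hz.1, hz.2⟩⟩

/-- The lattice `D(P)` of all `D`-closed subsets of a poset `P`. -/
def DSub (P : Type*) [PartialOrder P] : Type _ := {U : Set P // DClosed U}

namespace DSub

variable {P : Type*} [PartialOrder P]

instance : PartialOrder (DSub P) := Subtype.partialOrder _

instance : InfSet (DSub P) :=
  ⟨fun S => ⟨⋂ U ∈ S, U.1, by
    intro x p y h1 h2 h3
    simp only [Set.mem_iInter] at h3 ⊢
    intro U hU
    exact U.2 x p y h1 h2 (h3.imp (fun h => h U hU) fun h => h U hU)⟩⟩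

noncomputable instance : CompleteLattice (DSub P) :=
  completeLatticeOfInf (DSub P) (by
    intro S
    constructor
    · intro t ht
      exact Set.biInter_subset_of_mem (t := fun U => U.1) ht
    · intro b hb
      exact Set.subset_iInter₂ fun t ht => hb ht)

end DSub

section Stmt10Aux

variable {P : Type*} [PartialOrder P]

lemma Co.le_iff {X Y : Co P} : X ≤ Y ↔ X.1 ⊆ Y.1 := Iff.rfl

/-- The candidate underlying set of `X ⊔ Y`. -/
def Co.joinSet (X Y : Co P) : Set P :=
  X.1 ∪ Y.1 ∪ {z | ∃ x ∈ X.1, ∃ y ∈ Y.1, (x ≤ z ∧ z ≤ y) ∨ (y ≤ z ∧ z ≤ x)}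

lemma Co.joinSet_ordConnected (X Y : Co P) : (Co.joinSet X Y).OrdConnected := by
  constructor
  rintro u hu v hv z hz
  obtain ⟨hz1, hz2⟩ := hz
  have mixed : ∀ x ∈ X.1, ∀ y ∈ Y.1, (x ≤ z ∧ z ≤ y) ∨ (y ≤ z ∧ z ≤ x) →
      z ∈ Co.joinSet X Y := fun x hx y hy h => Or.inr ⟨x, hx, y, hy, h⟩
  rcases hu with (hu | hu) | ⟨xu, hxu, yu, hyu, hcu⟩ <;>
    rcases hv with (hv | hv) | ⟨xv, hxv, yv, hyv, hcv⟩
  · exact Or.inl (Or.inl (X.2.out hu hv ⟨hz1, hz2⟩))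
  · exact mixed u hu v hv (Or.inl ⟨hz1, hz2⟩)
  · rcases hcv with ⟨h1, h2⟩ | ⟨h1, h2⟩
    · exact mixed u hu yv hyv (Or.inl ⟨hz1, hz2.trans h2⟩)
    · exact Or.inl (Or.inl (X.2.out hu hxv ⟨hz1, hz2.trans h2⟩))
  · exact mixed v hv u hu (Or.inr ⟨hz1, hz2⟩)
  · exact Or.inl (Or.inr (Y.2.out hu hv ⟨hz1, hz2⟩))
  · rcases hcv with ⟨h1, h2⟩ | ⟨h1, h2⟩
    · exact Or.inl (Or.inr (Y.2.out hu hyv ⟨hz1, hz2.trans h2⟩))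
    · exact mixed xv hxv u hu (Or.inr ⟨hz1, hz2.trans h2⟩)
  · rcases hcu with ⟨h1, h2⟩ | ⟨h1, h2⟩
    · exact Or.inl (Or.inl (X.2.out hxu hv ⟨h1.trans hz1, hz2⟩))
    · exact mixed v hv yu hyu (Or.inr ⟨h1.trans hz1, hz2⟩)
  · rcases hcu with ⟨h1, h2⟩ | ⟨h1, h2⟩
    · exact mixed xu hxu v hv (Or.inl ⟨h1.trans hz1, hz2⟩)
    · exact Or.inl (Or.inr (Y.2.out hyu hv ⟨h1.trans hz1, hz2⟩))
  · rcases hcu with ⟨h1, h2⟩ | ⟨h1, h2⟩ <;> rcases hcv with ⟨h1', h2'⟩ | ⟨h1', h2'⟩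
    · exact mixed xu hxu yv hyv (Or.inl ⟨h1.trans hz1, hz2.trans h2'⟩)
    · exact Or.inl (Or.inl (X.2.out hxu hxv ⟨h1.trans hz1, hz2.trans h2'⟩))
    · exact Or.inl (Or.inr (Y.2.out hyu hyv ⟨h1.trans hz1, hz2.trans h2'⟩))
    · exact mixed xv hxv yu hyu (Or.inr ⟨h1.trans hz1, hz2.trans h2'⟩)

lemma Co.sup_eq (X Y : Co P) : (X ⊔ Y).1 = Co.joinSet X Y := by
  apply Set.Subset.antisymm
  · have h : X ⊔ Y ≤ ⟨Co.joinSet X Y, Co.joinSet_ordConnected X Y⟩ :=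
      sup_le (fun z hz => Or.inl (Or.inl hz)) (fun z hz => Or.inl (Or.inr hz))
    exact h
  · rintro z ((hz | hz) | ⟨x, hx, y, hy, hc⟩)
    · exact (le_sup_left : X ≤ X ⊔ Y) hz
    · exact (le_sup_right : Y ≤ X ⊔ Y) hz
    · have hx' : x ∈ (X ⊔ Y).1 := (le_sup_left : X ≤ X ⊔ Y) hx
      have hy' : y ∈ (X ⊔ Y).1 := (le_sup_right : Y ≤ X ⊔ Y) hy
      rcases hc with ⟨h1, h2⟩ | ⟨h1, h2⟩
      · exact (X ⊔ Y).2.out hx' hy' ⟨h1, h2⟩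
      · exact (X ⊔ Y).2.out hy' hx' ⟨h1, h2⟩

lemma Co.sngl_le_iff {p : P} {X : Co P} : Co.sngl p ≤ X ↔ p ∈ X.1 :=
  Set.singleton_subset_iff

lemma Co.lt_sngl {p : P} {X : Co P} (h : X < Co.sngl p) : X.1 = ∅ := by
  rcases Set.subset_singleton_iff_eq.mp (Co.le_iff.mp h.le) with h' | h'
  · exact h'
  · exact absurd (Subtype.ext h') h.ne

end Stmt10Aux

theorem stmt10 (P : Type*) [PartialOrder P] :
    JoinSeed (Co P) (Set.range fun p : P => Co.sngl p) := by
  refine ⟨?_, ?_, ?_⟩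
  · rintro _ ⟨p, rfl⟩ X Y hpXY
    have hp : p ∈ (X ⊔ Y).1 := by rw [← hpXY]; exact rfl
    have hX : X.1 ⊆ {p} := Co.le_iff.mp (hpXY ▸ (le_sup_left : X ≤ X ⊔ Y))
    have hY : Y.1 ⊆ {p} := Co.le_iff.mp (hpXY ▸ (le_sup_right : Y ≤ X ⊔ Y))
    rw [Co.sup_eq] at hp
    have goalX : p ∈ X.1 → Co.sngl p = X ∨ Co.sngl p = Y := fun h =>
      Or.inl (Subtype.ext ((Set.singleton_subset_iff.mpr h).antisymm hX))
    have goalY : p ∈ Y.1 → Co.sngl p = X ∨ Co.sngl p = Y := fun h =>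
      Or.inr (Subtype.ext ((Set.singleton_subset_iff.mpr h).antisymm hY))
    rcases hp with (hp | hp) | ⟨x, hx, y, hy, _⟩
    · exact goalX hp
    · exact goalY hp
    · exact goalX (by rwa [← hX hx])
  · intro a
    refine ⟨(fun p : P => Co.sngl p) '' a.1, Set.image_subset_range _ _, ?_, ?_⟩
    · rintro _ ⟨p, hp, rfl⟩
      exact Co.sngl_le_iff.mpr hp
    · intro b hb
      intro p hp
      exact Co.sngl_le_iff.mp (hb ⟨p, hp, rfl⟩)
  · rintro _ ⟨p, rfl⟩ a b hab ha hb
    have hp : p ∈ (a ⊔ b).1 := Co.sngl_le_iff.mp hab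
    rw [Co.sup_eq] at hp
    have ha' : p ∉ a.1 := fun h => ha (Co.sngl_le_iff.mpr h)
    have hb' : p ∉ b.1 := fun h => hb (Co.sngl_le_iff.mpr h)
    rcases hp with (hp | hp) | ⟨x, hx, y, hy, hc⟩
    · exact absurd hp ha'
    · exact absurd hp hb'
    · refine ⟨Co.sngl x, ⟨x, rfl⟩, Co.sngl y, ⟨y, rfl⟩, Co.sngl_le_iff.mpr hx,
        Co.sngl_le_iff.mpr hy, ?_, ?_, ?_⟩
      · rw [Co.sngl_le_iff, Co.sup_eq]
        exact Or.inr ⟨x, rfl, y, rfl, hc⟩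
      · intro x' hx' hle
        rw [Co.sngl_le_iff, Co.sup_eq] at hle
        have hx'e := Co.lt_sngl hx'
        rcases hle with (h | h) | ⟨u, hu, _⟩
        · rw [hx'e] at h; exact h
        · exact hb' (h ▸ hy)
        · rw [hx'e] at hu; exact hu
      · intro y' hy' hle
        rw [Co.sngl_le_iff, Co.sup_eq] at hle
        have hy'e := Co.lt_sngl hy'
        rcases hle with (h | h) | ⟨_, _, v, hv, _⟩
        · exact ha' (h ▸ hx)
        · rw [hy'e] at h; exact h
        · rw [hy'e] at hv; exact hv
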